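/- Let n ≥ 6 and let C_1, …, C_{n−1} ∈ GL_r(ℂ) be an irreducible representation of B_n of dimension r ≥ n+1; set A_i = C_i − I, T = C_1 ⋯ C_{n−1}, A_0 = T C_{n−1} T^{−1} − I, indices in ℤ_n. Suppose rank(A_i) = 3 for all i ∈ ℤ_n and Im A_i ∩ Im A_{i+1} ≠ {0} for all i ∈ ℤ_n (indices modulo n). Then dim(Im A_i ∩ Im A_{i+1}) = 1 for all i ∈ ℤ_n. -/

import Mathlib

private lemma zmod_step_all {n : ℕ} [NeZero n] {α : Type*} (f : ZMod n → α) (E : α → α)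
    (hE : ∀ j, E (f j) = f (j + 1)) {i : ZMod n} (hi : f i = f (i + 1)) :
    ∀ j : ZMod n, f j = f (j + 1) := by
  have key : ∀ m : ℕ, f (i + m) = f (i + m + 1) := by
    intro m
    induction m with
    | zero => simpa using hi
    | succ m ih =>
      have h2 : E (f (i + m)) = E (f (i + m + 1)) := congrArg E ih
      rw [hE, hE] at h2
      have hc : ((m + 1 : ℕ) : ZMod n) = (m : ZMod n) + 1 := by push_cast; ring
      rw [hc, ← add_assoc]
      exact h2
  intro j
  have h2 := key (j - i).val
  rw [ZMod.natCast_zmod_val] at h2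
  have h3 : i + (j - i) = j := by ring
  rwa [h3] at h2

private lemma zmod_all_eq {n : ℕ} [NeZero n] {α : Type*} (f : ZMod n → α)
    (h : ∀ j, f j = f (j + 1)) (j k : ZMod n) : f j = f k := by
  have key : ∀ (m : ℕ) (j : ZMod n), f j = f (j + m) := by
    intro m
    induction m with
    | zero => simp
    | succ m ih =>
      intro j
      have hc : ((m + 1 : ℕ) : ZMod n) = (m : ZMod n) + 1 := by push_cast; ring
      rw [hc]
      rw [h j]
      have h4 := ih (j + 1)
      have h5 : j + 1 + (m : ZMod n) = j + ((m : ZMod n) + 1) := by ring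
      rwa [h5] at h4
  have h2 := key (k - j).val j
  rw [ZMod.natCast_zmod_val] at h2
  have h3 : j + (k - j) = k := by ring
  rwa [h3] at h2

private def FF {R M : Type*} [Semiring R] [AddCommGroup M] [Module R M]
    (g : ℕ → Submodule R M) : ℕ → Submodule R M
  | 0 => g 0
  | m + 1 => FF g m ⊔ g (m + 1)

/-- For `n ≥ 6` and an irreducible representation of `B_n` of dimension `r ≥ n+1`,
with `A i = C i - 1` (`i ∈ ℤ_n`, `A 0 = T C_{n-1} T⁻¹ - 1`): if `rank (A i) = 3` for
all `i` and `Im A_i ∩ Im A_{i+1} ≠ {0}` for all `i ∈ ℤ_n`, then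
`dim (Im A_i ∩ Im A_{i+1}) = 1` for all `i ∈ ℤ_n`. -/
theorem stmt_17 (n r : ℕ) (hn : 6 ≤ n) (hr : n + 1 ≤ r)
    (C : ℕ → Matrix (Fin r) (Fin r) ℂ)
    (hinv : ∀ i, 1 ≤ i → i ≤ n - 1 → IsUnit (C i))
    (hcomm : ∀ i j, 1 ≤ i → i ≤ n - 1 → 1 ≤ j → j ≤ n - 1 → i + 2 ≤ j →
      C i * C j = C j * C i)
    (hbraid : ∀ i, 1 ≤ i → i ≤ n - 2 →
      C i * C (i + 1) * C i = C (i + 1) * C i * C (i + 1))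
    (hirr : ∀ p : Submodule ℂ (Fin r → ℂ),
      (∀ i, 1 ≤ i → i ≤ n - 1 → ∀ v ∈ p, (C i).mulVec v ∈ p) → p = ⊥ ∨ p = ⊤)
    (T : Matrix (Fin r) (Fin r) ℂ)
    (hT : T = (List.map (fun i => C (i + 1)) (List.range (n - 1))).prod)
    (A : ZMod n → Matrix (Fin r) (Fin r) ℂ)
    (hA : ∀ i : ℕ, 1 ≤ i → i ≤ n - 1 → A (i : ZMod n) = C i - 1)
    (hA0 : A 0 = T * C (n - 1) * T⁻¹ - 1)
    (hrank : ∀ i : ZMod n, (A i).rank = 3)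
    (hne : ∀ i : ZMod n,
      LinearMap.range (A i).mulVecLin ⊓ LinearMap.range (A (i + 1)).mulVecLin ≠ ⊥) :
    ∀ i : ZMod n,
      Module.finrank ℂ
        ↥(LinearMap.range (A i).mulVecLin ⊓
          LinearMap.range (A (i + 1)).mulVecLin) = 1 := by
  haveI : NeZero n := ⟨by omega⟩
  -- partial products
  set D : ℕ → Matrix (Fin r) (Fin r) ℂ :=
    fun k => (List.map (fun i => C (i + 1)) (List.range k)).prod with hD
  have hT' : T = D (n - 1) := hT
  have hD0 : D 0 = 1 := by simp [hD]
  have hDsucc : ∀ k, D (k + 1) = D k * C (k + 1) := by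
    intro k; simp [hD, List.range_succ]
  have hDsplit : ∀ a b, D (a + b) =
      D a * (List.map (fun p => C (a + p + 1)) (List.range b)).prod := by
    intro a b
    simp only [hD]
    rw [List.range_add, List.map_append, List.prod_append, List.map_map]
    rfl
  have hDunit : ∀ k, k ≤ n - 1 → IsUnit (D k) := by
    intro k
    induction k with
    | zero => intro _; rw [hD0]; exact isUnit_one
    | succ k ih =>
      intro hk
      rw [hDsucc]
      exact (ih (by omega)).mul (hinv (k + 1) (by omega) (by omega))
  have hTu : IsUnit T := by rw [hT']; exact hDunit (n - 1) le_rfl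
  -- commutation of C j with D k for k + 2 ≤ j
  have hcommDC : ∀ j k : ℕ, k + 2 ≤ j → j ≤ n - 1 → D k * C j = C j * D k := by
    intro j k hkj hjn
    have hcm : Commute (C j) (D k) := by
      rw [hD]
      apply Commute.list_prod_right
      intro x hx
      obtain ⟨p, hp, rfl⟩ := List.mem_map.mp hx
      have hp' : p < k := List.mem_range.mp hp
      exact (hcomm (p + 1) j (by omega) (by omega) (by omega) (by omega) (by omega)).symm
    exact hcm.eq.symm
  -- the conjugation identity T C_i T⁻¹ = C_{i+1}
  have hdelta : ∀ i, 1 ≤ i → i ≤ n - 2 → T * C i = C (i + 1) * T := by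
    intro i h1 h2
    have hsplit := hDsplit (i + 1) (n - 1 - (i + 1))
    rw [show (i + 1) + (n - 1 - (i + 1)) = n - 1 by omega] at hsplit
    have htail : Commute (C i)
        ((List.map (fun p => C (i + 1 + p + 1)) (List.range (n - 1 - (i + 1)))).prod) := by
      apply Commute.list_prod_right
      intro x hx
      obtain ⟨p, hp, rfl⟩ := List.mem_map.mp hx
      have hp' : p < n - 1 - (i + 1) := List.mem_range.mp hp
      exact hcomm i (i + 1 + p + 1) h1 (by omega) (by omega) (by omega) (by omega)
    have hhead : D (i + 1) * C i = C (i + 1) * D (i + 1) := by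
      have e1 : D (i + 1) = D (i - 1) * C i * C (i + 1) := by
        have a1 := hDsucc i
        have a2 := hDsucc (i - 1)
        rw [show i - 1 + 1 = i by omega] at a2
        rw [a1, a2]
      have hcd : D (i - 1) * C (i + 1) = C (i + 1) * D (i - 1) :=
        hcommDC (i + 1) (i - 1) (by omega) (by omega)
      calc D (i + 1) * C i = D (i - 1) * (C i * C (i + 1) * C i) := by
            rw [e1]; simp only [mul_assoc]
        _ = D (i - 1) * (C (i + 1) * C i * C (i + 1)) := by rw [hbraid i h1 h2]
        _ = (D (i - 1) * C (i + 1)) * (C i * C (i + 1)) := by simp only [mul_assoc]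
        _ = (C (i + 1) * D (i - 1)) * (C i * C (i + 1)) := by rw [hcd]
        _ = C (i + 1) * D (i + 1) := by rw [e1]; simp only [mul_assoc]
    rw [hT', hsplit]
    calc D (i + 1) * (List.map (fun p => C (i + 1 + p + 1)) (List.range (n - 1 - (i + 1)))).prod * C i
        = D (i + 1) * ((List.map (fun p => C (i + 1 + p + 1)) (List.range (n - 1 - (i + 1)))).prod * C i) := by
          rw [mul_assoc]
      _ = D (i + 1) * (C i * (List.map (fun p => C (i + 1 + p + 1)) (List.range (n - 1 - (i + 1)))).prod) := by
          rw [← htail.eq]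
      _ = (D (i + 1) * C i) * (List.map (fun p => C (i + 1 + p + 1)) (List.range (n - 1 - (i + 1)))).prod := by
          rw [mul_assoc]
      _ = (C (i + 1) * D (i + 1)) * (List.map (fun p => C (i + 1 + p + 1)) (List.range (n - 1 - (i + 1)))).prod := by
          rw [hhead]
      _ = C (i + 1) * (D (i + 1) * (List.map (fun p => C (i + 1 + p + 1)) (List.range (n - 1 - (i + 1)))).prod) := by
          rw [mul_assoc]
  -- the key identity D k * D (k-1) * C k = C 1 * (D k * D (k-1))
  have hg : ∀ k, 2 ≤ k → k ≤ n - 1 → D k * D (k - 1) * C k = C 1 * (D k * D (k - 1)) := by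
    intro k
    induction k with
    | zero => omega
    | succ k ih =>
      intro h2 hk
      rcases Nat.lt_or_ge k 2 with hk2 | hk2
      · have hk1 : k = 1 := by omega
        subst hk1
        have d1 : D 1 = C 1 := by
          have := hDsucc 0; rw [hD0, one_mul] at this; exact this
        have hb := hbraid 1 (by omega) (by omega)
        simp only [show (1 + 1 : ℕ) = 2 from rfl, show (2 - 1 : ℕ) = 1 from rfl]
        have d2 : D 2 = C 1 * C 2 := by
          have := hDsucc 1; rw [d1] at this; exact this
        rw [d1, d2]
        conv_rhs => rw [hb]
        simp only [mul_assoc]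
      · have ih' := ih hk2 (by omega)
        have e1 : D (k + 1) = D k * C (k + 1) := hDsucc k
        have e2 : D k = D (k - 1) * C k := by
          have := hDsucc (k - 1); rw [show k - 1 + 1 = k by omega] at this; exact this
        have hc1 : D (k - 1) * C (k + 1) = C (k + 1) * D (k - 1) :=
          hcommDC (k + 1) (k - 1) (by omega) (by omega)
        have hc1' : ∀ X, D (k - 1) * (C (k + 1) * X) = C (k + 1) * (D (k - 1) * X) := by
          intro X; rw [← mul_assoc, hc1, mul_assoc]
        have hbE : C (k + 1) * (C k * C (k + 1)) = C k * (C (k + 1) * C k) := by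
          have hb := hbraid k (by omega) (by omega)
          simp only [mul_assoc] at hb
          exact hb.symm
        have ih'' : ∀ X, D (k - 1) * (C k * (D (k - 1) * (C k * X)))
            = C 1 * (D (k - 1) * (C k * (D (k - 1) * X))) := by
          intro X
          have h0 := congrArg (· * X) ih'
          rw [e2] at h0
          simp only [mul_assoc] at h0
          exact h0
        rw [show k + 1 - 1 = k by omega]
        calc D (k + 1) * D k * C (k + 1)
            = D (k - 1) * (C k * (C (k + 1) * (D (k - 1) * (C k * C (k + 1))))) := by
              rw [e1, e2]; simp only [mul_assoc]
          _ = D (k - 1) * (C k * (D (k - 1) * (C (k + 1) * (C k * C (k + 1))))) := by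
              rw [hc1' (C k * C (k + 1))]
          _ = D (k - 1) * (C k * (D (k - 1) * (C k * (C (k + 1) * C k)))) := by rw [hbE]
          _ = C 1 * (D (k - 1) * (C k * (D (k - 1) * (C (k + 1) * C k)))) := ih'' _
          _ = C 1 * (D (k - 1) * (C k * (C (k + 1) * (D (k - 1) * C k)))) := by
              rw [hc1' (C k)]
          _ = C 1 * (D (k + 1) * D k) := by rw [e1, e2]; simp only [mul_assoc]
  -- full twist: T² C_{n-1} = C_1 T²
  have hTT : T * T * C (n - 1) = C 1 * (T * T) := by
    have hgn := hg (n - 1) (by omega) le_rfl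
    rw [show n - 1 - 1 = n - 2 by omega] at hgn
    have e3 : D (n - 1) = D (n - 2) * C (n - 1) := by
      have := hDsucc (n - 2); rw [show n - 2 + 1 = n - 1 by omega] at this; exact this
    rw [hT']
    rw [e3] at hgn ⊢
    have h4 := congrArg (· * C (n - 1)) hgn
    simp only [mul_assoc] at h4 ⊢
    exact h4
  -- inverse facts
  have hdet : IsUnit T.det := (Matrix.isUnit_iff_isUnit_det T).mp hTu
  have hTi1 : T * T⁻¹ = 1 := Matrix.mul_nonsing_inv T hdet
  have hTi2 : T⁻¹ * T = 1 := Matrix.nonsing_inv_mul T hdet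
  have hcancelT : ∀ X Y : Matrix (Fin r) (Fin r) ℂ, X * T = Y * T → X = Y := by
    intro X Y h
    have h2 := congrArg (· * T⁻¹) h
    simpa only [mul_assoc, hTi1, mul_one] using h2
  -- conjugation by T shifts A cyclically
  have hTA : ∀ i : ZMod n, T * A i = A (i + 1) * T := by
    intro i
    have hval : ((i.val : ℕ) : ZMod n) = i := ZMod.natCast_zmod_val i
    have hlt : i.val < n := ZMod.val_lt i
    rcases Nat.eq_zero_or_pos i.val with h0 | h1
    · have hi0 : i = 0 := by rw [← hval, h0, Nat.cast_zero]
      rw [hi0, hA0, zero_add]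
      have hA1 : A 1 = C 1 - 1 := by
        have := hA 1 le_rfl (by omega); rwa [Nat.cast_one] at this
      rw [hA1, mul_sub, mul_one, sub_mul, one_mul]
      congr 1
      rw [← mul_assoc, ← mul_assoc, hTT, mul_assoc, mul_assoc, hTi1, mul_one]
    · rcases Nat.lt_or_ge i.val (n - 1) with h2 | h2
      · have hAk : A i = C i.val - 1 := by
          have h := hA i.val h1 (by omega); rwa [hval] at h
        have hi1 : i + 1 = ((i.val + 1 : ℕ) : ZMod n) := by
          rw [Nat.cast_add, Nat.cast_one, hval]
        have hAk1 : A (i + 1) = C (i.val + 1) - 1 := by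
          rw [hi1]; exact hA (i.val + 1) (by omega) (by omega)
        rw [hAk, hAk1, mul_sub, mul_one, sub_mul, one_mul, hdelta i.val h1 (by omega)]
      · have hk : i.val = n - 1 := by omega
        have hAk : A i = C (n - 1) - 1 := by
          have h := hA (n - 1) (by omega) le_rfl
          rw [← hk, hval] at h
          rwa [hk] at h
        have hi1 : i + 1 = 0 := by
          have hstep : ((n - 1 : ℕ) : ZMod n) + 1 = 0 := by
            have h1 : ((n - 1 + 1 : ℕ) : ZMod n) = ((n - 1 : ℕ) : ZMod n) + 1 := by
              push_cast; ring
            rw [← h1, show n - 1 + 1 = n by omega, ZMod.natCast_self]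
          rw [← hval, hk]
          exact hstep
        rw [hAk, hi1, hA0, mul_sub, mul_one, sub_mul, one_mul]
        congr 1
        conv_rhs => rw [mul_assoc, hTi2, mul_one]
  -- commutation of non-adjacent A's
  have hAcommNat : ∀ k : ℕ, 2 ≤ k → k + 2 ≤ n →
      A 1 * A (1 + (k : ZMod n)) = A (1 + (k : ZMod n)) * A 1 := by
    intro k h2 hkn
    have hA1 : A 1 = C 1 - 1 := by
      have := hA 1 le_rfl (by omega); rwa [Nat.cast_one] at this
    have hcast : (1 : ZMod n) + (k : ℕ) = ((1 + k : ℕ) : ZMod n) := by push_cast; ring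
    have hAk : A (1 + (k : ZMod n)) = C (1 + k) - 1 := by
      rw [hcast]; exact hA (1 + k) (by omega) (by omega)
    have hc := hcomm 1 (1 + k) le_rfl (by omega) (by omega) (by omega) (by omega)
    rw [hA1, hAk]
    simp only [mul_sub, sub_mul, mul_one, one_mul, hc]
    abel
  have hshiftC : ∀ X Y X' Y' : Matrix (Fin r) (Fin r) ℂ,
      T * X = X' * T → T * Y = Y' * T → X * Y = Y * X → X' * Y' = Y' * X' := by
    intro X Y X' Y' hX hY hXY
    apply hcancelT
    calc X' * Y' * T = X' * (Y' * T) := by rw [mul_assoc]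
      _ = X' * (T * Y) := by rw [hY]
      _ = (X' * T) * Y := by rw [mul_assoc]
      _ = (T * X) * Y := by rw [hX]
      _ = T * (X * Y) := by rw [mul_assoc]
      _ = T * (Y * X) := by rw [hXY]
      _ = (T * Y) * X := by rw [mul_assoc]
      _ = (Y' * T) * X := by rw [hY]
      _ = Y' * (T * X) := by rw [mul_assoc]
      _ = Y' * (X' * T) := by rw [hX]
      _ = Y' * X' * T := by rw [mul_assoc]
  have hAcommShift : ∀ (m k : ℕ), 2 ≤ k → k + 2 ≤ n →
      A (1 + (m : ZMod n)) * A (1 + (m : ZMod n) + (k : ZMod n))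
        = A (1 + (m : ZMod n) + (k : ZMod n)) * A (1 + (m : ZMod n)) := by
    intro m
    induction m with
    | zero =>
      intro k h2 hk
      simpa using hAcommNat k h2 hk
    | succ m ih =>
      intro k h2 hk
      have h := ih k h2 hk
      have hres := hshiftC _ _ _ _ (hTA (1 + (m : ZMod n)))
        (hTA (1 + (m : ZMod n) + (k : ZMod n))) h
      have hc1 : (1 : ZMod n) + ((m + 1 : ℕ) : ZMod n) = 1 + (m : ZMod n) + 1 := by
        push_cast; ring
      rw [hc1]
      have hc2 : (1 : ZMod n) + (m : ZMod n) + 1 + (k : ZMod n)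
          = 1 + (m : ZMod n) + (k : ZMod n) + 1 := by ring
      rw [hc2]
      exact hres
  have hAcomm : ∀ (i : ZMod n) (k : ℕ), 2 ≤ k → k + 2 ≤ n →
      A i * A (i + (k : ZMod n)) = A (i + (k : ZMod n)) * A i := by
    intro i k h2 hk
    have hm : (1 : ZMod n) + ((i - 1).val : ℕ) = i := by
      rw [ZMod.natCast_zmod_val]; ring
    have h := hAcommShift (i - 1).val k h2 hk
    rwa [hm] at h
  -- linear algebra setup
  let V : ZMod n → Submodule ℂ (Fin r → ℂ) := fun i => LinearMap.range (A i).mulVecLin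
  let W : ZMod n → Submodule ℂ (Fin r → ℂ) := fun i => V i ⊓ V (i + 1)
  suffices key : ∀ i : ZMod n, Module.finrank ℂ (W i) = 1 by
    intro i; exact key i
  have hV3 : ∀ i, Module.finrank ℂ (V i) = 3 := fun i => hrank i
  have hmemV : ∀ (i : ZMod n) (v : Fin r → ℂ), (A i).mulVec v ∈ V i :=
    fun i v => ⟨v, Matrix.mulVecLin_apply _ _⟩
  have hAV : ∀ j i : ZMod n, A j * A i = A i * A j →
      ∀ v ∈ V i, (A j).mulVec v ∈ V i := by
    intro j i hc v hv
    obtain ⟨u, hu⟩ := hv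
    refine ⟨(A j).mulVec u, ?_⟩
    rw [Matrix.mulVecLin_apply] at hu ⊢
    rw [Matrix.mulVec_mulVec, ← hc, ← Matrix.mulVec_mulVec, hu]
  have hinv' : ∀ p : Submodule ℂ (Fin r → ℂ),
      (∀ j : ℕ, 1 ≤ j → j ≤ n - 1 → ∀ v ∈ p, (A (j : ZMod n)).mulVec v ∈ p) →
      p = ⊥ ∨ p = ⊤ := by
    intro p hp
    apply hirr
    intro j h1 h2 v hv
    have hAj : C j = A (j : ZMod n) + 1 := by rw [hA j h1 h2, sub_add_cancel]
    rw [hAj, Matrix.add_mulVec, Matrix.one_mulVec]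
    exact p.add_mem (hp j h1 h2 v hv) hv
  -- the linear equivalence induced by T
  let e : (Fin r → ℂ) ≃ₗ[ℂ] (Fin r → ℂ) :=
    LinearEquiv.ofLinear T.mulVecLin T⁻¹.mulVecLin
      (by rw [← Matrix.mulVecLin_mul, hTi1, Matrix.mulVecLin_one])
      (by rw [← Matrix.mulVecLin_mul, hTi2, Matrix.mulVecLin_one])
  have hVmap : ∀ i, (V i).map (e : (Fin r → ℂ) →ₗ[ℂ] (Fin r → ℂ)) = V (i + 1) := by
    intro i
    have h1 : (e : (Fin r → ℂ) →ₗ[ℂ] (Fin r → ℂ)) = T.mulVecLin := rfl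
    have hsurj : LinearMap.range T.mulVecLin = ⊤ :=
      LinearMap.range_eq_top.mpr e.surjective
    have h2 : (V i).map T.mulVecLin
        = LinearMap.range (T.mulVecLin ∘ₗ (A i).mulVecLin) :=
      (LinearMap.range_comp _ _).symm
    rw [h1, h2, ← Matrix.mulVecLin_mul, hTA i, Matrix.mulVecLin_mul]
    exact LinearMap.range_comp_of_range_eq_top _ hsurj
  have hWmap : ∀ i, (W i).map (e : (Fin r → ℂ) →ₗ[ℂ] (Fin r → ℂ)) = W (i + 1) := by
    intro i
    show (V i ⊓ V (i + 1)).map _ = V (i + 1) ⊓ V (i + 1 + 1)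
    rw [Submodule.map_inf (e : (Fin r → ℂ) →ₗ[ℂ] (Fin r → ℂ)) e.injective, hVmap, hVmap]
  have hfinW : ∀ i, Module.finrank ℂ (W (i + 1)) = Module.finrank ℂ (W i) := by
    intro i
    rw [← hWmap i]
    exact LinearEquiv.finrank_map_eq e (W i)
  have hdeq : ∀ i, Module.finrank ℂ (W i) = Module.finrank ℂ (W 0) :=
    fun i => zmod_all_eq (fun j => Module.finrank ℂ (W j)) (fun j => (hfinW j).symm) i 0
  have hrtop : Module.finrank ℂ (⊤ : Submodule ℂ (Fin r → ℂ)) = r := by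
    rw [finrank_top, Module.finrank_fintype_fun_eq_card, Fintype.card_fin]
  have hWbot : ∀ i, W i ≠ ⊥ := fun i => hne i
  have hdpos : 0 < Module.finrank ℂ (W 0) := by
    rcases Nat.eq_zero_or_pos (Module.finrank ℂ (W 0)) with h | h
    · exact absurd (Submodule.finrank_eq_zero.mp h) (hWbot 0)
    · exact h
  have hdle : Module.finrank ℂ (W 0) ≤ 3 := by
    rw [← hV3 0]
    exact Submodule.finrank_mono inf_le_left
  have hd123 : Module.finrank ℂ (W 0) = 1 ∨ Module.finrank ℂ (W 0) = 2 ∨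
      Module.finrank ℂ (W 0) = 3 := by omega
  rcases hd123 with hd1 | hd2 | hd3
  · intro i; rw [hdeq i, hd1]
  · -- dimension 2 : contradiction
    exfalso
    have hd2' : ∀ i, Module.finrank ℂ (W i) = 2 := fun i => by rw [hdeq i, hd2]
    by_cases hex : ∃ i, W i = W (i + 1)
    · obtain ⟨i0, hi0⟩ := hex
      have hstep := zmod_step_all W
        (fun p => p.map (e : (Fin r → ℂ) →ₗ[ℂ] (Fin r → ℂ))) hWmap hi0
      have hWc : ∀ j, W j = W 0 := fun j => zmod_all_eq W hstep j 0
      have hclo : ∀ j : ℕ, 1 ≤ j → j ≤ n - 1 →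
          ∀ v ∈ W 0, (A (j : ZMod n)).mulVec v ∈ W 0 := by
        intro j h1 h2 v hv
        have hv' : v ∈ W ((j : ZMod n) + 2) := by rw [hWc]; exact hv
        have hv1 : v ∈ V ((j : ZMod n) + 2) := (Submodule.mem_inf.mp hv').1
        have hv2 : v ∈ V ((j : ZMod n) + 3) := by
          have h := (Submodule.mem_inf.mp hv').2
          rwa [show (j : ZMod n) + 2 + 1 = (j : ZMod n) + 3 by ring] at h
        have hc2 := hAcomm (j : ZMod n) 2 le_rfl (by omega)
        have hc3 := hAcomm (j : ZMod n) 3 (by omega) (by omega)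
        push_cast at hc2 hc3
        have m1 : (A (j : ZMod n)).mulVec v ∈ V ((j : ZMod n) + 2) :=
          hAV _ _ hc2 v hv1
        have m2 : (A (j : ZMod n)).mulVec v ∈ V ((j : ZMod n) + 3) :=
          hAV _ _ hc3 v hv2
        rw [← hWc ((j : ZMod n) + 2)]
        refine Submodule.mem_inf.mpr ⟨m1, ?_⟩
        rw [show (j : ZMod n) + 2 + 1 = (j : ZMod n) + 3 by ring]
        exact m2
      rcases hinv' (W 0) hclo with h | h
      · exact hWbot 0 h
      · have h2 := hd2' 0
        rw [h, hrtop] at h2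
        omega
    · push_neg at hex
      have hsupL : ∀ j, W j ⊔ W (j + 1) = V (j + 1) ∧
          Module.finrank ℂ (W j ⊓ W (j + 1) : Submodule ℂ (Fin r → ℂ)) = 1 := by
        intro j
        have hs : W j ⊔ W (j + 1) ≤ V (j + 1) := sup_le inf_le_right inf_le_left
        have h3 : Module.finrank ℂ (W j ⊔ W (j + 1) : Submodule ℂ (Fin r → ℂ)) ≤ 3 := by
          rw [← hV3 (j + 1)]
          exact Submodule.finrank_mono hs
        have h3' : 3 ≤ Module.finrank ℂ (W j ⊔ W (j + 1) : Submodule ℂ (Fin r → ℂ)) := by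
          by_contra hlt
          push_neg at hlt
          have e1 : W j = W j ⊔ W (j + 1) :=
            Submodule.eq_of_le_of_finrank_le le_sup_left (by rw [hd2' j]; omega)
          have e2 : W (j + 1) = W j ⊔ W (j + 1) :=
            Submodule.eq_of_le_of_finrank_le le_sup_right (by rw [hd2' (j + 1)]; omega)
          exact hex j (e1.trans e2.symm)
        have hsup : W j ⊔ W (j + 1) = V (j + 1) :=
          Submodule.eq_of_le_of_finrank_le hs (by rw [hV3 (j + 1)]; exact h3')
        refine ⟨hsup, ?_⟩
        have hform := Submodule.finrank_sup_add_finrank_inf_eq (W j) (W (j + 1))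
        have hw1 := hd2' j
        have hw2 := hd2' (j + 1)
        omega
      -- partial sums of the W's
      set g : ℕ → Submodule ℂ (Fin r → ℂ) := fun m => W ((m : ℕ) : ZMod n) with hgdef
      have hF0 : FF g 0 = W 0 := by
        show W ((0 : ℕ) : ZMod n) = W 0
        rw [Nat.cast_zero]
      have hFs : ∀ m, FF g (m + 1) = FF g m ⊔ W ((m + 1 : ℕ) : ZMod n) := fun m => rfl
      have hFmono : ∀ a b : ℕ, a ≤ b → FF g a ≤ FF g b := by
        intro a b hab
        induction hab with
        | refl => exact le_rfl
        | step h ih =>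
          refine ih.trans ?_
          rw [hFs]
          exact le_sup_left
      have hWleF : ∀ m : ℕ, W ((m : ℕ) : ZMod n) ≤ FF g m := by
        intro m
        cases m with
        | zero => exact le_of_eq rfl
        | succ m => exact le_sup_right
      have hFrank : ∀ m : ℕ, Module.finrank ℂ ↥(FF g m) ≤ 2 + m := by
        intro m
        induction m with
        | zero =>
          have h := hd2' 0
          rw [hF0]
          omega
        | succ m ih =>
          have hform := Submodule.finrank_sup_add_finrank_inf_eq (FF g m)
            (W ((m + 1 : ℕ) : ZMod n))
          have hinf1 : W ((m : ℕ) : ZMod n) ⊓ W (((m : ℕ) : ZMod n) + 1)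
              ≤ FF g m ⊓ W ((m + 1 : ℕ) : ZMod n) := by
            apply le_inf
            · exact inf_le_left.trans (hWleF m)
            · have hcst : ((m : ℕ) : ZMod n) + 1 = ((m + 1 : ℕ) : ZMod n) := by
                push_cast; ring
              rw [← hcst]
              exact inf_le_right
          have h1 := (hsupL ((m : ℕ) : ZMod n)).2
          have h1' := Submodule.finrank_mono hinf1
          have hW2 := hd2' ((m + 1 : ℕ) : ZMod n)
          show Module.finrank ℂ ↥(FF g m ⊔ W ((m + 1 : ℕ) : ZMod n)) ≤ 2 + (m + 1)
          omega
      have hVW : ∀ i : ZMod n, V i = W (i - 1) ⊔ W i := by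
        intro i
        have h := (hsupL (i - 1)).1
        rw [sub_add_cancel] at h
        exact h.symm
      have hclo2 : ∀ j : ℕ, 1 ≤ j → j ≤ n - 1 →
          ∀ v ∈ (⨆ i : ZMod n, W i), (A (j : ZMod n)).mulVec v ∈ (⨆ i : ZMod n, W i) := by
        intro j h1 h2 v hv
        have hm : (A (j : ZMod n)).mulVec v ∈ V (j : ZMod n) := hmemV _ _
        rw [hVW (j : ZMod n)] at hm
        have hle : W ((j : ZMod n) - 1) ⊔ W (j : ZMod n) ≤ ⨆ i : ZMod n, W i :=
          sup_le (le_iSup W _) (le_iSup W _)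
        exact hle hm
      have hUtop : (⨆ i : ZMod n, W i) = ⊤ := by
        rcases hinv' (⨆ i : ZMod n, W i) hclo2 with h | h
        · exfalso
          have hle : W 0 ≤ ⨆ i : ZMod n, W i := le_iSup W 0
          rw [h] at hle
          exact hWbot 0 (le_bot_iff.mp hle)
        · exact h
      have hFtop : FF g (n - 1) = ⊤ := by
        apply le_antisymm le_top
        rw [← hUtop]
        apply iSup_le
        intro i
        have hval : ((i.val : ℕ) : ZMod n) = i := ZMod.natCast_zmod_val i
        have h := hWleF i.val
        rw [hval] at h
        exact h.trans (hFmono i.val (n - 1) (by have := ZMod.val_lt i; omega))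
      have hFn1rank : Module.finrank ℂ ↥(FF g (n - 1)) = r := by rw [hFtop, hrtop]
      have hr1 : r = n + 1 := by
        have h1 := hFrank (n - 1)
        omega
      have hFn1 : FF g (n - 1) = FF g (n - 2) ⊔ W ((n - 1 : ℕ) : ZMod n) := by
        have h := hFs (n - 2)
        rwa [show n - 2 + 1 = n - 1 by omega] at h
      have hform := Submodule.finrank_sup_add_finrank_inf_eq (FF g (n - 2))
        (W ((n - 1 : ℕ) : ZMod n))
      have hFn2le := hFrank (n - 2)
      have hinfle : Module.finrank ℂ
          (FF g (n - 2) ⊓ W ((n - 1 : ℕ) : ZMod n) : Submodule ℂ (Fin r → ℂ)) ≤ 1 := by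
        have hsupr : Module.finrank ℂ
            (FF g (n - 2) ⊔ W ((n - 1 : ℕ) : ZMod n) : Submodule ℂ (Fin r → ℂ)) = n + 1 := by
          rw [← hFn1, hFtop, hrtop]; exact hr1
        have hW2 := hd2' ((n - 1 : ℕ) : ZMod n)
        omega
      let L : ZMod n → Submodule ℂ (Fin r → ℂ) := fun j => W j ⊓ W (j + 1)
      have hL1rank : ∀ j, Module.finrank ℂ (L j) = 1 := fun j => (hsupL j).2
      have hcancast : ((n - 2 : ℕ) : ZMod n) + 1 = ((n - 1 : ℕ) : ZMod n) := by
        have h1 : ((n - 2 + 1 : ℕ) : ZMod n) = ((n - 2 : ℕ) : ZMod n) + 1 := by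
          push_cast; ring
        rw [← h1, show n - 2 + 1 = n - 1 by omega]
      have hcast0 : ((n - 1 : ℕ) : ZMod n) + 1 = 0 := by
        have h1 : ((n - 1 + 1 : ℕ) : ZMod n) = ((n - 1 : ℕ) : ZMod n) + 1 := by
          push_cast; ring
        rw [← h1, show n - 1 + 1 = n by omega, ZMod.natCast_self]
      have hL1le : L ((n - 2 : ℕ) : ZMod n) ≤ FF g (n - 2) ⊓ W ((n - 1 : ℕ) : ZMod n) := by
        apply le_inf
        · exact inf_le_left.trans (hWleF (n - 2))
        · show W ((n - 2 : ℕ) : ZMod n) ⊓ W (((n - 2 : ℕ) : ZMod n) + 1)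
              ≤ W ((n - 1 : ℕ) : ZMod n)
          rw [hcancast]
          exact inf_le_right
      have hL2le : L ((n - 1 : ℕ) : ZMod n) ≤ FF g (n - 2) ⊓ W ((n - 1 : ℕ) : ZMod n) := by
        apply le_inf
        · have h2 : W 0 ≤ FF g (n - 2) := by
            rw [← hF0]; exact hFmono 0 (n - 2) (by omega)
          show W ((n - 1 : ℕ) : ZMod n) ⊓ W (((n - 1 : ℕ) : ZMod n) + 1)
              ≤ FF g (n - 2)
          rw [hcast0]
          exact inf_le_right.trans h2
        · exact inf_le_left
      have hLeq : L ((n - 2 : ℕ) : ZMod n) = L ((n - 1 : ℕ) : ZMod n) := by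
        have e1 : L ((n - 2 : ℕ) : ZMod n) = FF g (n - 2) ⊓ W ((n - 1 : ℕ) : ZMod n) :=
          Submodule.eq_of_le_of_finrank_le hL1le (by rw [hL1rank]; exact hinfle)
        have e2 : L ((n - 1 : ℕ) : ZMod n) = FF g (n - 2) ⊓ W ((n - 1 : ℕ) : ZMod n) :=
          Submodule.eq_of_le_of_finrank_le hL2le (by rw [hL1rank]; exact hinfle)
        rw [e1, ← e2]
      have hLmap : ∀ j, (L j).map (e : (Fin r → ℂ) →ₗ[ℂ] (Fin r → ℂ)) = L (j + 1) := by
        intro j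
        show (W j ⊓ W (j + 1)).map _ = W (j + 1) ⊓ W (j + 1 + 1)
        rw [Submodule.map_inf (e : (Fin r → ℂ) →ₗ[ℂ] (Fin r → ℂ)) e.injective, hWmap, hWmap]
      have hLstep : ∀ j, L j = L (j + 1) := by
        apply zmod_step_all L (fun p => p.map (e : (Fin r → ℂ) →ₗ[ℂ] (Fin r → ℂ))) hLmap
        rw [hcancast]
        exact hLeq
      have hLc : ∀ j, L j = L 0 := fun j => zmod_all_eq L hLstep j 0
      have hclo3 : ∀ j : ℕ, 1 ≤ j → j ≤ n - 1 →
          ∀ v ∈ L 0, (A (j : ZMod n)).mulVec v ∈ L 0 := by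
        intro j h1 h2 v hv
        have hv' : v ∈ L ((j : ZMod n) + 2) := by rw [hLc]; exact hv
        have hva : v ∈ W ((j : ZMod n) + 2) := (Submodule.mem_inf.mp hv').1
        have hvb : v ∈ W ((j : ZMod n) + 3) := by
          have h := (Submodule.mem_inf.mp hv').2
          rwa [show (j : ZMod n) + 2 + 1 = (j : ZMod n) + 3 by ring] at h
        have hv1 : v ∈ V ((j : ZMod n) + 2) := (Submodule.mem_inf.mp hva).1
        have hv2 : v ∈ V ((j : ZMod n) + 3) := by
          have h := (Submodule.mem_inf.mp hva).2
          rwa [show (j : ZMod n) + 2 + 1 = (j : ZMod n) + 3 by ring] at h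
        have hv3 : v ∈ V ((j : ZMod n) + 4) := by
          have h := (Submodule.mem_inf.mp hvb).2
          rwa [show (j : ZMod n) + 3 + 1 = (j : ZMod n) + 4 by ring] at h
        have hc2 := hAcomm (j : ZMod n) 2 le_rfl (by omega)
        have hc3 := hAcomm (j : ZMod n) 3 (by omega) (by omega)
        have hc4 := hAcomm (j : ZMod n) 4 (by omega) (by omega)
        push_cast at hc2 hc3 hc4
        have m1 : (A (j : ZMod n)).mulVec v ∈ V ((j : ZMod n) + 2) := hAV _ _ hc2 v hv1
        have m2 : (A (j : ZMod n)).mulVec v ∈ V ((j : ZMod n) + 3) := hAV _ _ hc3 v hv2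
        have m3 : (A (j : ZMod n)).mulVec v ∈ V ((j : ZMod n) + 4) := hAV _ _ hc4 v hv3
        have key1 : (A (j : ZMod n)).mulVec v ∈ W ((j : ZMod n) + 2) := by
          refine Submodule.mem_inf.mpr ⟨m1, ?_⟩
          rw [show (j : ZMod n) + 2 + 1 = (j : ZMod n) + 3 by ring]
          exact m2
        have key2 : (A (j : ZMod n)).mulVec v ∈ W ((j : ZMod n) + 3) := by
          refine Submodule.mem_inf.mpr ⟨m2, ?_⟩
          rw [show (j : ZMod n) + 3 + 1 = (j : ZMod n) + 4 by ring]
          exact m3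
        rw [← hLc ((j : ZMod n) + 2)]
        refine Submodule.mem_inf.mpr ⟨key1, ?_⟩
        rw [show (j : ZMod n) + 2 + 1 = (j : ZMod n) + 3 by ring]
        exact key2
      rcases hinv' (L 0) hclo3 with h | h
      · have h2 := hL1rank 0
        rw [h, finrank_bot] at h2
        omega
      · have h2 := hL1rank 0
        rw [h, hrtop] at h2
        omega
  · -- dimension 3 : contradiction
    exfalso
    have hWV : ∀ i, V i = V (i + 1) := by
      intro i
      have hd3' : Module.finrank ℂ (W i) = 3 := by rw [hdeq i, hd3]
      have h1 : W i = V i :=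
        Submodule.eq_of_le_of_finrank_le inf_le_left (by rw [hV3 i, hd3'])
      have h2 : W i = V (i + 1) :=
        Submodule.eq_of_le_of_finrank_le inf_le_right (by rw [hV3 (i + 1), hd3'])
      rw [← h1, h2]
    have hVc : ∀ i, V i = V 0 := fun i => zmod_all_eq V hWV i 0
    have hclo : ∀ j : ℕ, 1 ≤ j → j ≤ n - 1 →
        ∀ v ∈ V 0, (A (j : ZMod n)).mulVec v ∈ V 0 := by
      intro j h1 h2 v hv
      rw [← hVc (j : ZMod n)]
      exact hmemV _ _
    rcases hinv' (V 0) hclo with h | h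
    · have h2 := hV3 0
      rw [h, finrank_bot] at h2
      omega
    · have h2 := hV3 0
      rw [h, hrtop] at h2
      omega
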